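/- Let T' and T'' be trees each with at least two vertices, with u a vertex of T' and v a vertex of T''. Let T_1 be the tree obtained from the disjoint union of T' and T'' by adding the edge uv, and let T_2 be the tree obtained from the disjoint union of T' and T'' by identifying u with v and then attaching one new pendant vertex to the identified vertex. Then F(T_1) < F(T_2) and F*(T_1) < F*(T_2). -/

import Mathlib

open SimpleGraph

/-- A subtree of a graph `G` is a nonempty set of vertices inducing a connected subgraph. -/
def IsSubtree {V : Type} (G : SimpleGraph V) (s : Finset V) : Prop :=
  s.Nonempty ∧ (G.induce (s : Set V)).Connected

/-- `F(G)`: the number of subtrees of `G`. -/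
noncomputable def numSubtrees {V : Type} (G : SimpleGraph V) : ℕ :=
  {s : Finset V | IsSubtree G s}.ncard

/-- A leaf is a vertex of degree 1. -/
def IsLeaf {V : Type} (G : SimpleGraph V) (v : V) : Prop :=
  (G.neighborSet v).ncard = 1

/-- `F*(G)`: the number of subtrees of `G` containing at least one leaf of `G`. -/
noncomputable def numLeafSubtrees {V : Type} (G : SimpleGraph V) : ℕ :=
  {s : Finset V | IsSubtree G s ∧ ∃ v ∈ s, IsLeaf G v}.ncard

/-- `f_G(v)`: the number of subtrees of `G` containing the vertex `v`. -/
noncomputable def numSubtreesContaining {V : Type} (G : SimpleGraph V) (v : V) : ℕ :=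
  {s : Finset V | IsSubtree G s ∧ v ∈ s}.ncard

/-- `f*_G(v)`: the number of subtrees of `G` containing `v` and at least one leaf of `G`
different from `v`. -/
noncomputable def numLeafSubtreesContaining {V : Type} (G : SimpleGraph V) (v : V) : ℕ :=
  {s : Finset V | IsSubtree G s ∧ v ∈ s ∧ ∃ w ∈ s, w ≠ v ∧ IsLeaf G w}.ncard

/-- A finite set of edges of `G` that are pairwise non-incident. -/
def IsMatchingSet {V : Type} (G : SimpleGraph V) (M : Finset (Sym2 V)) : Prop :=
  (M : Set (Sym2 V)) ⊆ G.edgeSet ∧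
    ∀ e ∈ M, ∀ f ∈ M, e ≠ f → ∀ v : V, ¬(v ∈ e ∧ v ∈ f)

/-- The matching number: the maximum size of a set of pairwise non-incident edges. -/
noncomputable def matchingNumber {V : Type} (G : SimpleGraph V) : ℕ :=
  sSup {k | ∃ M : Finset (Sym2 V), IsMatchingSet G M ∧ M.card = k}

/-- `G` has a perfect matching: pairwise non-incident edges covering every vertex. -/
def HasPerfectMatching {V : Type} (G : SimpleGraph V) : Prop :=
  ∃ M : Finset (Sym2 V), IsMatchingSet G M ∧ ∀ v : V, ∃ e ∈ M, v ∈ e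

/-- A dominating set: every vertex outside `S` has a neighbour in `S`. -/
def IsDominating {V : Type} (G : SimpleGraph V) (S : Set V) : Prop :=
  ∀ v : V, v ∉ S → ∃ u ∈ S, G.Adj u v

/-- The domination number: the minimum size of a dominating set. -/
noncomputable def dominationNumber {V : Type} (G : SimpleGraph V) : ℕ :=
  sInf {k | ∃ S : Finset V, IsDominating G (S : Set V) ∧ S.card = k}

/-- The tree `A(n,q)`: a center vertex adjacent to `n - 2q + 1` leaves and to the
midpoints of `q - 1` pendant paths of length 2. -/
def treeA (n q : ℕ) : SimpleGraph (Unit ⊕ Fin (n - 2 * q + 1) ⊕ Fin (q - 1) ⊕ Fin (q - 1)) :=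
  SimpleGraph.fromRel fun x y =>
    match x, y with
    | Sum.inl _, Sum.inr (Sum.inl _) => True
    | Sum.inl _, Sum.inr (Sum.inr (Sum.inl _)) => True
    | Sum.inr (Sum.inr (Sum.inl i)), Sum.inr (Sum.inr (Sum.inr j)) => i = j
    | _, _ => False

/-- The corona `G ∘ K₁`: attach one new pendant vertex to each vertex of `G`. -/
def corona {V : Type} (G : SimpleGraph V) : SimpleGraph (V ⊕ V) :=
  SimpleGraph.fromRel fun x y =>
    match x, y with
    | Sum.inl a, Sum.inl b => G.Adj a b
    | Sum.inl a, Sum.inr b => a = b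
    | _, _ => False

/-- `P₄(1^a, 1^b)`: a path on 4 vertices with `a` pendant vertices attached to one
endvertex and `b` pendant vertices attached to the other endvertex. -/
def treeP4 (a b : ℕ) : SimpleGraph (Fin 4 ⊕ Fin a ⊕ Fin b) :=
  SimpleGraph.fromRel fun x y =>
    match x, y with
    | Sum.inl i, Sum.inl j => (j : ℕ) = (i : ℕ) + 1
    | Sum.inl i, Sum.inr (Sum.inl _) => i = 0
    | Sum.inl i, Sum.inr (Sum.inr _) => i = 3
    | _, _ => False

/-- The broom `T_{n,Δ}`: a path on `n - Δ + 1` vertices with `Δ - 1` pendant vertices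
attached to one endvertex. -/
def broom (n Δ : ℕ) : SimpleGraph (Fin (n - Δ + 1) ⊕ Fin (Δ - 1)) :=
  SimpleGraph.fromRel fun x y =>
    match x, y with
    | Sum.inl i, Sum.inl j => (j : ℕ) = (i : ℕ) + 1
    | Sum.inl i, Sum.inr _ => (i : ℕ) = 0
    | _, _ => False

/-- `T'_{n,Δ}`: a path on `n - 2Δ + 3` vertices with `Δ - 2` pendant paths of length 2
and one pendant edge attached to one endvertex of the path. -/
def treeT' (n Δ : ℕ) :
    SimpleGraph (Fin (n - 2 * Δ + 3) ⊕ Fin (Δ - 2) ⊕ Fin (Δ - 2) ⊕ Unit) :=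
  SimpleGraph.fromRel fun x y =>
    match x, y with
    | Sum.inl i, Sum.inl j => (j : ℕ) = (i : ℕ) + 1
    | Sum.inl i, Sum.inr (Sum.inl _) => (i : ℕ) = 0
    | Sum.inr (Sum.inl i), Sum.inr (Sum.inr (Sum.inl j)) => i = j
    | Sum.inl i, Sum.inr (Sum.inr (Sum.inr _)) => (i : ℕ) = 0
    | _, _ => False

/-- The spider with `i` legs of length `l` and `j` legs of length `L`. -/
def spider (i l j L : ℕ) : SimpleGraph (Unit ⊕ (Fin i × Fin l) ⊕ (Fin j × Fin L)) :=
  SimpleGraph.fromRel fun x y =>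
    match x, y with
    | Sum.inl _, Sum.inr (Sum.inl (_, t)) => (t : ℕ) = 0
    | Sum.inl _, Sum.inr (Sum.inr (_, t)) => (t : ℕ) = 0
    | Sum.inr (Sum.inl (a, s)), Sum.inr (Sum.inl (b, t)) => a = b ∧ (t : ℕ) = (s : ℕ) + 1
    | Sum.inr (Sum.inr (a, s)), Sum.inr (Sum.inr (b, t)) => a = b ∧ (t : ℕ) = (s : ℕ) + 1
    | _, _ => False

/-- `Ť_{n,k}^d`: a path `v_1 v_2 … v_{d+1}` on `d + 1` vertices with `n - d - 1`
pendant vertices attached to the vertex `v_k` (`1 ≤ k ≤ d + 1`). -/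
def treeHat (n d k : ℕ) : SimpleGraph (Fin (d + 1) ⊕ Fin (n - d - 1)) :=
  SimpleGraph.fromRel fun x y =>
    match x, y with
    | Sum.inl i, Sum.inl j => (j : ℕ) = (i : ℕ) + 1
    | Sum.inl i, Sum.inr _ => (i : ℕ) + 1 = k
    | _, _ => False

/-- The tree obtained from the disjoint union of `T` and a rooted tree `X` by
identifying the root `u` of `X` with the vertex `x` of `T`. -/
def graft {A B : Type} (T : SimpleGraph A) (X : SimpleGraph B) (x : A) (u : B) :
    SimpleGraph (A ⊕ {b : B // b ≠ u}) :=
  SimpleGraph.fromRel fun p q =>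
    match p, q with
    | Sum.inl a, Sum.inl b => T.Adj a b
    | Sum.inr a, Sum.inr b => X.Adj (a : B) (b : B)
    | Sum.inl a, Sum.inr b => a = x ∧ X.Adj u (b : B)
    | Sum.inr _, Sum.inl _ => False

/-- The tree obtained from the disjoint union of `G` and `H` by adding the edge `uv`. -/
def joinByEdge {A B : Type} (G : SimpleGraph A) (H : SimpleGraph B) (u : A) (v : B) :
    SimpleGraph (A ⊕ B) :=
  SimpleGraph.fromRel fun p q =>
    match p, q with
    | Sum.inl a, Sum.inl b => G.Adj a b
    | Sum.inr a, Sum.inr b => H.Adj a b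
    | Sum.inl a, Sum.inr b => a = u ∧ b = v
    | Sum.inr _, Sum.inl _ => False

/-- The graph obtained from `G` by attaching one new pendant vertex to `x`. -/
def attachPendant {A : Type} (G : SimpleGraph A) (x : A) : SimpleGraph (A ⊕ Unit) :=
  SimpleGraph.fromRel fun p q =>
    match p, q with
    | Sum.inl a, Sum.inl b => G.Adj a b
    | Sum.inl a, Sum.inr _ => a = x
    | _, _ => False

-- Auxiliary development

-- general lemmas
lemma reachable_of_pseudoHom {V W : Type*} {G : SimpleGraph V} {H : SimpleGraph W} (f : V → W)
    (h : ∀ a b, G.Adj a b → H.Adj (f a) (f b) ∨ f a = f b) {x y : V}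
    (r : G.Reachable x y) : H.Reachable (f x) (f y) := by
  obtain ⟨w⟩ := r
  induction w with
  | nil => exact Reachable.refl _
  | cons h' p ih =>
    rcases h _ _ h' with h2 | h2
    · exact h2.reachable.trans ih
    · rw [h2]; exact ih

lemma connected_induce_image {V W : Type*} {G : SimpleGraph V} {H : SimpleGraph W} {s : Set V}
    (f : V → W) (hadj : ∀ x ∈ s, ∀ y ∈ s, G.Adj x y ↔ H.Adj (f x) (f y))
    (hc : (G.induce s).Connected) : (H.induce (f '' s)).Connected := by
  have hne : Nonempty s := hc.nonempty
  obtain ⟨⟨x0, hx0⟩⟩ := hne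
  rw [connected_iff]
  refine ⟨?_, ?_⟩
  · rintro ⟨w1, x1, hx1, rfl⟩ ⟨w2, x2, hx2, rfl⟩
    have r := hc.preconnected ⟨x1, hx1⟩ ⟨x2, hx2⟩
    have := reachable_of_pseudoHom (H := H.induce (f '' s))
      (f := fun p : s => (⟨f p.1, Set.mem_image_of_mem f p.2⟩ : f '' s)) ?_ r
    · exact this
    · rintro ⟨a, ha⟩ ⟨b, hb⟩ hab
      left
      exact ((hadj a ha b hb).mp hab : H.Adj (f a) (f b))
  · exact ⟨⟨f x0, Set.mem_image_of_mem f hx0⟩⟩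

lemma connected_induce_singleton {V : Type*} (G : SimpleGraph V) (x : V) :
    (G.induce {x}).Connected := by
  rw [connected_iff]
  refine ⟨?_, ?_⟩
  · rintro ⟨a, rfl⟩ ⟨b, rfl⟩
    exact Reachable.refl _
  · exact ⟨⟨x, rfl⟩⟩

lemma connected_induce_insert {V : Type*} {G : SimpleGraph V} {X : Set V} {x0 w : V}
    (hX : (G.induce X).Connected) (hx : x0 ∈ X) (ha : G.Adj x0 w) :
    (G.induce (X ∪ {w})).Connected := by
  have : X ∪ {w} = X ∪ {x0, w} := by
    ext y; simp only [Set.mem_union, Set.mem_singleton_iff, Set.mem_insert_iff]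
    constructor
    · rintro (h | h) <;> tauto
    · rintro (h | h | h) <;> [left; (left; rwa [h]); right] <;> tauto
  rw [this]
  exact induce_union_connected hX.preconnected (induce_pair_connected_of_adj ha).preconnected ⟨x0, hx, by simp⟩

section Adj
variable {A B : Type} (T' : SimpleGraph A) (T'' : SimpleGraph B) (u : A) (v : B)

@[simp] lemma join_adj_ll {a b : A} :
    (joinByEdge T' T'' u v).Adj (Sum.inl a) (Sum.inl b) ↔ T'.Adj a b := by
  simp only [joinByEdge, fromRel_adj, ne_eq, Sum.inl.injEq]
  constructor
  · rintro ⟨h, h2 | h2⟩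
    · exact h2
    · exact h2.symm
  · intro h; exact ⟨h.ne, Or.inl h⟩

@[simp] lemma join_adj_rr {a b : B} :
    (joinByEdge T' T'' u v).Adj (Sum.inr a) (Sum.inr b) ↔ T''.Adj a b := by
  simp only [joinByEdge, fromRel_adj, ne_eq, Sum.inr.injEq]
  constructor
  · rintro ⟨h, h2 | h2⟩
    · exact h2
    · exact h2.symm
  · intro h; exact ⟨h.ne, Or.inl h⟩

@[simp] lemma join_adj_lr {a : A} {b : B} :
    (joinByEdge T' T'' u v).Adj (Sum.inl a) (Sum.inr b) ↔ a = u ∧ b = v := by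
  simp only [joinByEdge, fromRel_adj, ne_eq]
  constructor
  · rintro ⟨h, h2 | h2⟩
    · exact h2
    · exact h2.elim
  · intro h; exact ⟨by simp, Or.inl h⟩

@[simp] lemma join_adj_rl {a : A} {b : B} :
    (joinByEdge T' T'' u v).Adj (Sum.inr b) (Sum.inl a) ↔ a = u ∧ b = v := by
  rw [adj_comm]; exact join_adj_lr T' T'' u v

@[simp] lemma graft_adj_ll {a b : A} :
    (graft T' T'' u v).Adj (Sum.inl a) (Sum.inl b) ↔ T'.Adj a b := by
  simp only [graft, fromRel_adj, ne_eq, Sum.inl.injEq]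
  constructor
  · rintro ⟨h, h2 | h2⟩
    · exact h2
    · exact h2.symm
  · intro h; exact ⟨h.ne, Or.inl h⟩

@[simp] lemma graft_adj_rr {a b : {b : B // b ≠ v}} :
    (graft T' T'' u v).Adj (Sum.inr a) (Sum.inr b) ↔ T''.Adj ↑a ↑b := by
  simp only [graft, fromRel_adj, ne_eq, Sum.inr.injEq]
  constructor
  · rintro ⟨h, h2 | h2⟩
    · exact h2
    · exact h2.symm
  · intro h
    refine ⟨fun e => ?_, Or.inl h⟩
    exact h.ne (Subtype.ext_iff.mp e ▸ rfl)

@[simp] lemma graft_adj_lr {a : A} {b : {b : B // b ≠ v}} :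
    (graft T' T'' u v).Adj (Sum.inl a) (Sum.inr b) ↔ a = u ∧ T''.Adj v ↑b := by
  simp only [graft, fromRel_adj, ne_eq]
  constructor
  · rintro ⟨h, h2 | h2⟩
    · exact h2
    · exact h2.elim
  · intro h; exact ⟨by simp, Or.inl h⟩

@[simp] lemma graft_adj_rl {a : A} {b : {b : B // b ≠ v}} :
    (graft T' T'' u v).Adj (Sum.inr b) (Sum.inl a) ↔ a = u ∧ T''.Adj v ↑b := by
  rw [adj_comm]; exact graft_adj_lr T' T'' u v

variable {C : Type} (G : SimpleGraph C) (x : C)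

@[simp] lemma pendant_adj_ll {a b : C} :
    (attachPendant G x).Adj (Sum.inl a) (Sum.inl b) ↔ G.Adj a b := by
  simp only [attachPendant, fromRel_adj, ne_eq, Sum.inl.injEq]
  constructor
  · rintro ⟨h, h2 | h2⟩
    · exact h2
    · exact h2.symm
  · intro h; exact ⟨h.ne, Or.inl h⟩

@[simp] lemma pendant_adj_lr {a : C} {z : Unit} :
    (attachPendant G x).Adj (Sum.inl a) (Sum.inr z) ↔ a = x := by
  simp only [attachPendant, fromRel_adj, ne_eq]
  constructor
  · rintro ⟨h, h2 | h2⟩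
    · exact h2
    · exact h2.elim
  · intro h; exact ⟨by simp, Or.inl h⟩

@[simp] lemma pendant_adj_rl {a : C} {z : Unit} :
    (attachPendant G x).Adj (Sum.inr z) (Sum.inl a) ↔ a = x := by
  rw [adj_comm]; exact pendant_adj_lr G x

@[simp] lemma pendant_adj_rr {z z' : Unit} :
    (attachPendant G x).Adj (Sum.inr z) (Sum.inr z') ↔ False := by
  simp only [attachPendant, fromRel_adj, ne_eq]
  constructor
  · rintro ⟨h, h2 | h2⟩ <;> exact h2
  · exact False.elim

end Adj

section Struct
variable {A B : Type} {T' : SimpleGraph A} {T'' : SimpleGraph B} {u : A} {v : B}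

/-- In a connected induced subgraph of `joinByEdge` meeting both sides, both `u` and `v`
are present. -/
lemma cross_mem {S : Set (A ⊕ B)}
    (hc : ((joinByEdge T' T'' u v).induce S).Connected)
    {a : A} {b : B} (ha : Sum.inl a ∈ S) (hb : Sum.inr b ∈ S) :
    Sum.inl u ∈ S ∧ Sum.inr v ∈ S := by
  obtain ⟨w⟩ := hc.preconnected ⟨Sum.inl a, ha⟩ ⟨Sum.inr b, hb⟩
  have main : ∀ {x y : ↑S} (_ : ((joinByEdge T' T'' u v).induce S).Walk x y),
      (∃ a, x.1 = Sum.inl a) → (∃ b, y.1 = Sum.inr b) →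
      Sum.inl u ∈ S ∧ Sum.inr v ∈ S := by
    intro x y w
    induction w with
    | nil =>
      rintro ⟨a', hxa⟩ ⟨b', hyb⟩
      rw [hxa] at hyb; simp at hyb
    | @cons x y z hadj p ih =>
      rintro ⟨a', hxa⟩ hzb
      obtain ⟨yv, hy⟩ := y
      match yv with
      | Sum.inl a'' => exact ih ⟨a'', rfl⟩ hzb
      | Sum.inr b' =>
        obtain ⟨xv, hx⟩ := x
        simp only at hxa
        subst hxa
        have : (joinByEdge T' T'' u v).Adj (Sum.inl a') (Sum.inr b') := hadj
        rw [join_adj_lr] at this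
        obtain ⟨rfl, rfl⟩ := this
        exact ⟨hx, hy⟩
  exact main w ⟨a, rfl⟩ ⟨b, rfl⟩

lemma partA_connected {S : Set (A ⊕ B)}
    (hc : ((joinByEdge T' T'' u v).induce S).Connected)
    (hu : Sum.inl u ∈ S) :
    (T'.induce {a : A | Sum.inl a ∈ S}).Connected := by
  rw [connected_iff]
  constructor
  · rintro ⟨a1, h1⟩ ⟨a2, h2⟩
    have r := hc.preconnected ⟨Sum.inl a1, h1⟩ ⟨Sum.inl a2, h2⟩
    refine reachable_of_pseudoHom
      (f := fun p : S => (⟨Sum.elim id (fun _ => u) p.1,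
        by rcases p with ⟨x | x, hx⟩ <;> simpa⟩ : {a : A | Sum.inl a ∈ S})) ?_ r
    rintro ⟨xv, hx⟩ ⟨yv, hy⟩ hadj
    match xv, yv with
    | Sum.inl a', Sum.inl a'' =>
      left
      exact (join_adj_ll T' T'' u v).mp hadj
    | Sum.inl a', Sum.inr b' =>
      right
      have := (join_adj_lr T' T'' u v).mp hadj
      exact Subtype.ext (by simp [this.1])
    | Sum.inr b', Sum.inl a' =>
      right
      have := (join_adj_rl T' T'' u v).mp hadj
      exact Subtype.ext (by simp [this.1])
    | Sum.inr b', Sum.inr b'' => exact Or.inr rfl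
  · exact ⟨⟨u, hu⟩⟩

lemma partB_connected {S : Set (A ⊕ B)}
    (hc : ((joinByEdge T' T'' u v).induce S).Connected)
    (hv : Sum.inr v ∈ S) :
    (T''.induce {b : B | Sum.inr b ∈ S}).Connected := by
  rw [connected_iff]
  constructor
  · rintro ⟨b1, h1⟩ ⟨b2, h2⟩
    have r := hc.preconnected ⟨Sum.inr b1, h1⟩ ⟨Sum.inr b2, h2⟩
    refine reachable_of_pseudoHom
      (f := fun p : S => (⟨Sum.elim (fun _ => v) id p.1,
        by rcases p with ⟨x | x, hx⟩ <;> simpa⟩ : {b : B | Sum.inr b ∈ S})) ?_ r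
    rintro ⟨xv, hx⟩ ⟨yv, hy⟩ hadj
    match xv, yv with
    | Sum.inr b', Sum.inr b'' =>
      left
      exact (join_adj_rr T' T'' u v).mp hadj
    | Sum.inl a', Sum.inr b' =>
      right
      have := (join_adj_lr T' T'' u v).mp hadj
      exact Subtype.ext (by simp [this.2])
    | Sum.inr b', Sum.inl a' =>
      right
      have := (join_adj_rl T' T'' u v).mp hadj
      exact Subtype.ext (by simp [this.2])
    | Sum.inl a', Sum.inl a'' => exact Or.inr rfl
  · exact ⟨⟨v, hv⟩⟩

end Struct

attribute [local instance] Classical.propDecidable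

section Map
variable {A B : Type}

open Classical in
/-- vertex map from `T₁` to `T₂` -/
noncomputable def mmap (u : A) (v : B) : A ⊕ B → (A ⊕ {b : B // b ≠ v}) ⊕ Unit
  | Sum.inl a => Sum.inl (Sum.inl a)
  | Sum.inr b => if h : b = v then Sum.inl (Sum.inl u) else Sum.inl (Sum.inr ⟨b, h⟩)

variable {u : A} {v : B}

@[simp] lemma mmap_inl (a : A) : mmap u v (Sum.inl a) = Sum.inl (Sum.inl a) := rfl

@[simp] lemma mmap_inr_v : mmap u v (Sum.inr v) = Sum.inl (Sum.inl u) := by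
  simp [mmap]

lemma mmap_inr_ne {b : B} (h : b ≠ v) :
    mmap u v (Sum.inr b) = Sum.inl (Sum.inr ⟨b, h⟩) := by
  simp [mmap, h]

lemma mmap_ne_w (x : A ⊕ B) : mmap u v x ≠ Sum.inr () := by
  rcases x with a | b
  · simp
  · by_cases h : b = v
    · subst h; simp
    · rw [mmap_inr_ne h]; simp

open Classical in
/-- the injection from subtrees of `T₁` to subtrees of `T₂` -/
noncomputable def phi (u : A) (v : B) (S : Finset (A ⊕ B)) :
    Finset ((A ⊕ {b : B // b ≠ v}) ⊕ Unit) :=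
  if S = {Sum.inr v} then {Sum.inr ()}
  else if Sum.inl u ∈ S ∧ Sum.inr v ∈ S then S.image (mmap u v) ∪ {Sum.inr ()}
  else S.image (mmap u v)

lemma w_not_mem_image {S : Finset (A ⊕ B)} :
    Sum.inr () ∉ S.image (mmap u v) := by
  classical
  simp only [Finset.mem_image, not_exists]
  rintro x ⟨hx, hmx⟩
  exact mmap_ne_w x hmx

lemma mem_image_ll {S : Finset (A ⊕ B)} {a : A} :
    Sum.inl (Sum.inl a) ∈ S.image (mmap u v) ↔
      (Sum.inl a ∈ S ∨ (a = u ∧ Sum.inr v ∈ S)) := by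
  classical
  simp only [Finset.mem_image]
  constructor
  · rintro ⟨x, hx, hmx⟩
    rcases x with a' | b'
    · simp only [mmap_inl, Sum.inl.injEq] at hmx
      subst hmx; exact Or.inl hx
    · by_cases h : b' = v
      · subst h
        simp only [mmap_inr_v, Sum.inl.injEq] at hmx
        exact Or.inr ⟨hmx.symm, hx⟩
      · rw [mmap_inr_ne h] at hmx; simp at hmx
  · rintro (h | ⟨rfl, h⟩)
    · exact ⟨Sum.inl a, h, rfl⟩
    · exact ⟨Sum.inr v, h, by simp⟩

lemma mem_image_lr {S : Finset (A ⊕ B)} {b : B} {hb : b ≠ v} :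
    Sum.inl (Sum.inr ⟨b, hb⟩) ∈ S.image (mmap u v) ↔ Sum.inr b ∈ S := by
  classical
  simp only [Finset.mem_image]
  constructor
  · rintro ⟨x, hx, hmx⟩
    rcases x with a' | b'
    · simp at hmx
    · by_cases h : b' = v
      · subst h; simp at hmx
      · rw [mmap_inr_ne h] at hmx
        simp only [Sum.inl.injEq, Sum.inr.injEq, Subtype.mk.injEq] at hmx
        subst hmx; exact hx
  · intro h; exact ⟨Sum.inr b, h, mmap_inr_ne hb⟩

/-- every subtree of `T₁` is flagged (contains `u` and `v`) or lies on one side -/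
lemma side_or_flag {T' : SimpleGraph A} {T'' : SimpleGraph B} {S : Finset (A ⊕ B)}
    (hc : ((joinByEdge T' T'' u v).induce (S : Set (A ⊕ B))).Connected)
    (hfl : ¬(Sum.inl u ∈ S ∧ Sum.inr v ∈ S)) :
    (∀ x ∈ S, ∃ a, x = Sum.inl a) ∨ (∀ x ∈ S, ∃ b, x = Sum.inr b) := by
  by_contra h
  push_neg at h
  obtain ⟨⟨x, hx, hxa⟩, ⟨y, hy, hyb⟩⟩ := h
  rcases x with a | b
  · exact hxa a rfl
  rcases y with a | b'
  · exact hfl (cross_mem hc hy hx)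
  · exact hyb b' rfl

end Map

attribute [local instance] Classical.propDecidable

section MapsTo
variable {A B : Type} {T' : SimpleGraph A} {T'' : SimpleGraph B} {u : A} {v : B}

local notation "T1" => joinByEdge T' T'' u v
local notation "T2" => attachPendant (graft T' T'' u v) (Sum.inl u)

lemma t2_adj_ll {a a' : A} :
    (T2).Adj (Sum.inl (Sum.inl a)) (Sum.inl (Sum.inl a')) ↔ T'.Adj a a' := by
  rw [pendant_adj_ll, graft_adj_ll]

lemma t2_adj_mmapB {b b' : B} :
    (T2).Adj (mmap u v (Sum.inr b)) (mmap u v (Sum.inr b')) ↔ T''.Adj b b' := by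
  by_cases h : b = v <;> by_cases h' : b' = v
  · subst h; subst h'
    simp only [mmap_inr_v]
    constructor
    · intro hc; exact absurd rfl hc.ne
    · intro hc; exact absurd rfl hc.ne
  · subst h
    rw [mmap_inr_v, mmap_inr_ne h', pendant_adj_ll, graft_adj_lr]
    simp
  · subst h'
    rw [mmap_inr_v, mmap_inr_ne h, pendant_adj_ll, adj_comm, graft_adj_lr]
    simp [adj_comm]
  · rw [mmap_inr_ne h, mmap_inr_ne h', pendant_adj_ll, graft_adj_rr]

lemma mmapB_inj {b b' : B} (h : mmap u v (Sum.inr b) = mmap u v (Sum.inr b')) : b = b' := by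
  by_cases hb : b = v <;> by_cases hb' : b' = v
  · rw [hb, hb']
  · rw [hb, mmap_inr_v, mmap_inr_ne hb'] at h; simp at h
  · rw [hb', mmap_inr_v, mmap_inr_ne hb] at h; simp at h
  · rw [mmap_inr_ne hb, mmap_inr_ne hb'] at h
    simpa using h

lemma image_mmap_flag {S : Finset (A ⊕ B)} :
    (mmap u v) '' (S : Set (A ⊕ B)) =
      ((fun a => (Sum.inl (Sum.inl a) : (A ⊕ {b : B // b ≠ v}) ⊕ Unit)) ''
          {a : A | Sum.inl a ∈ S}) ∪
        ((fun b => mmap u v (Sum.inr b)) '' {b : B | Sum.inr b ∈ S}) := by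
  ext z
  constructor
  · rintro ⟨x, hx, rfl⟩
    rcases x with a | b
    · exact Or.inl ⟨a, hx, rfl⟩
    · exact Or.inr ⟨b, hx, rfl⟩
  · rintro (⟨a, ha, rfl⟩ | ⟨b, hb, rfl⟩)
    · exact ⟨Sum.inl a, ha, rfl⟩
    · exact ⟨Sum.inr b, hb, rfl⟩

lemma phi_subtree {S : Finset (A ⊕ B)} (hS : IsSubtree T1 S) :
    IsSubtree T2 (phi u v S) := by
  obtain ⟨hne, hconn⟩ := hS
  by_cases hsp : S = {Sum.inr v}
  · rw [phi, if_pos hsp]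
    exact ⟨⟨Sum.inr (), Finset.mem_singleton_self _⟩, by
      rw [Finset.coe_singleton]; exact connected_induce_singleton _ _⟩
  by_cases hfl : Sum.inl u ∈ S ∧ Sum.inr v ∈ S
  · -- flagged case
    obtain ⟨hu, hv⟩ := hfl
    have CA := connected_induce_image (H := T2)
      (f := fun a => (Sum.inl (Sum.inl a) : (A ⊕ {b : B // b ≠ v}) ⊕ Unit))
      (fun x _ y _ => t2_adj_ll.symm) (partA_connected hconn hu)
    have CB := connected_induce_image (H := T2)
      (f := fun b => mmap u v (Sum.inr b))
      (fun x _ y _ => t2_adj_mmapB.symm) (partB_connected hconn hv)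
    have CXY := induce_union_connected CA.preconnected CB.preconnected
      ⟨Sum.inl (Sum.inl u), ⟨u, hu, rfl⟩, ⟨v, hv, by simp⟩⟩
    have Cfull := connected_induce_insert (w := Sum.inr ()) CXY
      (Or.inl ⟨u, hu, rfl⟩) (by rw [pendant_adj_lr])
    refine ⟨?_, ?_⟩
    · rw [phi, if_neg hsp, if_pos ⟨hu, hv⟩]
      exact ⟨Sum.inr (), by simp⟩
    · have hcoe : ((phi u v S : Finset _) : Set ((A ⊕ {b : B // b ≠ v}) ⊕ Unit)) =
          (((fun a => (Sum.inl (Sum.inl a) : (A ⊕ {b : B // b ≠ v}) ⊕ Unit)) ''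
            {a : A | Sum.inl a ∈ S}) ∪
          ((fun b => mmap u v (Sum.inr b)) '' {b : B | Sum.inr b ∈ S})) ∪ {Sum.inr ()} := by
        rw [phi, if_neg hsp, if_pos ⟨hu, hv⟩, Finset.coe_union, Finset.coe_image,
          Finset.coe_singleton, image_mmap_flag]
      rw [hcoe]
      exact Cfull
  · -- one-sided case
    rcases side_or_flag hconn hfl with hside | hside
    · have hadj : ∀ x ∈ (S : Set (A ⊕ B)), ∀ y ∈ (S : Set (A ⊕ B)),
          (T1).Adj x y ↔ (T2).Adj (mmap u v x) (mmap u v y) := by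
        intro x hx y hy
        obtain ⟨a, rfl⟩ := hside x hx
        obtain ⟨a', rfl⟩ := hside y hy
        rw [join_adj_ll, mmap_inl, mmap_inl, t2_adj_ll]
      have := connected_induce_image (f := mmap u v) hadj hconn
      refine ⟨?_, ?_⟩
      · rw [phi, if_neg hsp, if_neg hfl]; exact hne.image _
      · rw [phi, if_neg hsp, if_neg hfl, Finset.coe_image]
        exact this
    · have hadj : ∀ x ∈ (S : Set (A ⊕ B)), ∀ y ∈ (S : Set (A ⊕ B)),
          (T1).Adj x y ↔ (T2).Adj (mmap u v x) (mmap u v y) := by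
        intro x hx y hy
        obtain ⟨b, rfl⟩ := hside x hx
        obtain ⟨b', rfl⟩ := hside y hy
        rw [join_adj_rr, t2_adj_mmapB]
      have := connected_induce_image (f := mmap u v) hadj hconn
      refine ⟨?_, ?_⟩
      · rw [phi, if_neg hsp, if_neg hfl]; exact hne.image _
      · rw [phi, if_neg hsp, if_neg hfl, Finset.coe_image]
        exact this

end MapsTo

attribute [local instance] Classical.propDecidable

section Inj
variable {A B : Type} {T' : SimpleGraph A} {T'' : SimpleGraph B} {u : A} {v : B}

local notation "T1" => joinByEdge T' T'' u v

lemma w_mem_phi_flag {S : Finset (A ⊕ B)} (hsp : S ≠ {Sum.inr v})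
    (hfl : Sum.inl u ∈ S ∧ Sum.inr v ∈ S) : Sum.inr () ∈ phi u v S := by
  rw [phi, if_neg hsp, if_pos hfl]
  simp

lemma mem_phi_of_flag {S : Finset (A ⊕ B)} (hsp : S ≠ {Sum.inr v})
    (hfl : Sum.inl u ∈ S ∧ Sum.inr v ∈ S) (x : A ⊕ B) :
    x ∈ S ↔ mmap u v x ∈ phi u v S := by
  rw [phi, if_neg hsp, if_pos hfl, Finset.mem_union]
  have hnw : mmap u v x ∈ ({Sum.inr ()} : Finset ((A ⊕ {b : B // b ≠ v}) ⊕ Unit)) ↔ False := by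
    simp only [Finset.mem_singleton, iff_false]
    exact mmap_ne_w x
  rw [hnw, or_false]
  rcases x with a | b
  · rw [mmap_inl, mem_image_ll]
    constructor
    · exact Or.inl
    · rintro (h | ⟨rfl, _⟩)
      · exact h
      · exact hfl.1
  · by_cases hb : b = v
    · subst hb
      rw [mmap_inr_v, mem_image_ll]
      constructor
      · intro h; exact Or.inr ⟨rfl, h⟩
      · intro _; exact hfl.2
    · rw [mmap_inr_ne hb, mem_image_lr]

lemma phi_injOn {S S' : Finset (A ⊕ B)} (hS : IsSubtree T1 S) (hS' : IsSubtree T1 S')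
    (heq : phi u v S = phi u v S') : S = S' := by
  by_cases hsp : S = {Sum.inr v} <;> by_cases hsp' : S' = {Sum.inr v}
  · rw [hsp, hsp']
  · exfalso
    rw [phi, if_pos hsp] at heq
    by_cases hfl' : Sum.inl u ∈ S' ∧ Sum.inr v ∈ S'
    · have h1 : Sum.inl (Sum.inl u) ∈ phi u v S' :=
        ((mem_phi_of_flag hsp' hfl' (Sum.inl u)).mp hfl'.1)
      rw [← heq] at h1
      simp at h1
    · have h1 : Sum.inr () ∈ phi u v S' := by rw [← heq]; simp
      rw [phi, if_neg hsp', if_neg hfl'] at h1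
      exact w_not_mem_image h1
  · exfalso
    have heq' := heq.symm
    rw [phi, if_pos hsp'] at heq'
    by_cases hfl : Sum.inl u ∈ S ∧ Sum.inr v ∈ S
    · have h1 : Sum.inl (Sum.inl u) ∈ phi u v S :=
        ((mem_phi_of_flag hsp hfl (Sum.inl u)).mp hfl.1)
      rw [← heq'] at h1
      simp at h1
    · have h1 : Sum.inr () ∈ phi u v S := by rw [← heq']; simp
      rw [phi, if_neg hsp, if_neg hfl] at h1
      exact w_not_mem_image h1
  · by_cases hfl : Sum.inl u ∈ S ∧ Sum.inr v ∈ S <;>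
      by_cases hfl' : Sum.inl u ∈ S' ∧ Sum.inr v ∈ S'
    · ext x
      rw [mem_phi_of_flag hsp hfl x, mem_phi_of_flag hsp' hfl' x, heq]
    · exfalso
      have h1 := w_mem_phi_flag hsp hfl
      rw [heq, phi, if_neg hsp', if_neg hfl'] at h1
      exact w_not_mem_image h1
    · exfalso
      have h1 := w_mem_phi_flag hsp' hfl'
      rw [← heq, phi, if_neg hsp, if_neg hfl] at h1
      exact w_not_mem_image h1
    · rw [phi, if_neg hsp, if_neg hfl, phi, if_neg hsp', if_neg hfl'] at heq
      rcases side_or_flag hS.2 hfl with hside | hside <;>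
        rcases side_or_flag hS'.2 hfl' with hside' | hside'
      · -- both left
        apply Finset.Subset.antisymm <;> intro x hx
        · obtain ⟨a, rfl⟩ := hside x hx
          have : Sum.inl (Sum.inl a) ∈ S'.image (mmap u v) := by
            rw [← heq]; exact mem_image_ll.mpr (Or.inl hx)
          rcases mem_image_ll.mp this with h | ⟨rfl, h⟩
          · exact h
          · obtain ⟨a', ha'⟩ := hside' _ h; simp at ha'
        · obtain ⟨a, rfl⟩ := hside' x hx
          have : Sum.inl (Sum.inl a) ∈ S.image (mmap u v) := by
            rw [heq]; exact mem_image_ll.mpr (Or.inl hx)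
          rcases mem_image_ll.mp this with h | ⟨rfl, h⟩
          · exact h
          · obtain ⟨a', ha'⟩ := hside _ h; simp at ha'
      · -- S left, S' right : contradiction
        exfalso
        apply hsp'
        have key : ∀ y ∈ S', y = Sum.inr v := by
          intro y hy
          obtain ⟨b', rfl⟩ := hside' y hy
          have : mmap u v (Sum.inr b') ∈ S.image (mmap u v) := by
            rw [heq]; exact Finset.mem_image_of_mem _ hy
          obtain ⟨x, hx, hmx⟩ := Finset.mem_image.mp this
          obtain ⟨a, rfl⟩ := hside x hx
          by_cases hb' : b' = v
          · rw [hb']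
          · rw [mmap_inr_ne hb', mmap_inl] at hmx; simp at hmx
        obtain ⟨y0, hy0⟩ := hS'.1
        apply Finset.eq_singleton_iff_unique_mem.mpr
        exact ⟨(key y0 hy0) ▸ hy0, key⟩
      · -- S right, S' left : contradiction
        exfalso
        apply hsp
        have key : ∀ y ∈ S, y = Sum.inr v := by
          intro y hy
          obtain ⟨b', rfl⟩ := hside y hy
          have : mmap u v (Sum.inr b') ∈ S'.image (mmap u v) := by
            rw [← heq]; exact Finset.mem_image_of_mem _ hy
          obtain ⟨x, hx, hmx⟩ := Finset.mem_image.mp this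
          obtain ⟨a, rfl⟩ := hside' x hx
          by_cases hb' : b' = v
          · rw [hb']
          · rw [mmap_inr_ne hb', mmap_inl] at hmx; simp at hmx
        obtain ⟨y0, hy0⟩ := hS.1
        apply Finset.eq_singleton_iff_unique_mem.mpr
        exact ⟨(key y0 hy0) ▸ hy0, key⟩
      · -- both right
        apply Finset.Subset.antisymm <;> intro x hx
        · obtain ⟨b, rfl⟩ := hside x hx
          have : mmap u v (Sum.inr b) ∈ S'.image (mmap u v) := by
            rw [← heq]; exact Finset.mem_image_of_mem _ hx
          obtain ⟨y, hy, hmy⟩ := Finset.mem_image.mp this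
          obtain ⟨b', rfl⟩ := hside' y hy
          rwa [mmapB_inj hmy] at hy
        · obtain ⟨b, rfl⟩ := hside' x hx
          have : mmap u v (Sum.inr b) ∈ S.image (mmap u v) := by
            rw [heq]; exact Finset.mem_image_of_mem _ hx
          obtain ⟨y, hy, hmy⟩ := Finset.mem_image.mp this
          obtain ⟨b', rfl⟩ := hside y hy
          rwa [mmapB_inj hmy] at hy

end Inj

attribute [local instance] Classical.propDecidable

set_option linter.unusedSectionVars false
section Leaf

lemma exists_adj {A : Type} [Fintype A] {G : SimpleGraph A} (h : G.Connected)
    (hcard : 2 ≤ Fintype.card A) (x : A) : ∃ y, G.Adj x y := by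
  obtain ⟨y, hy⟩ := Fintype.exists_ne_of_one_lt_card (by omega) x
  obtain ⟨w⟩ := h.preconnected x y
  cases w with
  | nil => exact absurd rfl hy
  | cons hadj p => exact ⟨_, hadj⟩

lemma isLeaf_iff_degree {A : Type} [Fintype A] {G : SimpleGraph A} (x : A) :
    IsLeaf G x ↔ G.degree x = 1 := by
  unfold IsLeaf
  rw [← Nat.card_coe_set_eq, Nat.card_eq_fintype_card, SimpleGraph.card_neighborSet_eq_degree]

lemma exists_leaf_ne {A : Type} [Fintype A] {T' : SimpleGraph A} (h : T'.IsTree)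
    (hcard : 2 ≤ Fintype.card A) (u : A) : ∃ ℓ, ℓ ≠ u ∧ IsLeaf T' ℓ := by
  have hdeg1 : ∀ x : A, 1 ≤ T'.degree x := by
    intro x
    obtain ⟨y, hy⟩ := exists_adj h.isConnected hcard x
    have : 0 < T'.degree x := (SimpleGraph.degree_pos_iff_exists_adj T' x).mpr ⟨y, hy⟩
    omega
  by_contra hno
  push_neg at hno
  have hdeg2 : ∀ x : A, x ≠ u → 2 ≤ T'.degree x := by
    intro x hx
    have h1 := hdeg1 x
    have h2 : T'.degree x ≠ 1 := fun e => hno x hx ((isLeaf_iff_degree x).mpr e)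
    omega
  have hsum := T'.sum_degrees_eq_twice_card_edges
  have hedge := h.card_edgeFinset
  have hsplit : ∑ x, T'.degree x
      = T'.degree u + ∑ x ∈ Finset.univ.erase u, T'.degree x :=
    (Finset.add_sum_erase _ _ (Finset.mem_univ u)).symm
  have hlow := Finset.card_nsmul_le_sum (Finset.univ.erase u) (fun x => T'.degree x) 2
    (fun x hx => hdeg2 x (Finset.ne_of_mem_erase hx))
  rw [smul_eq_mul, Finset.card_erase_of_mem (Finset.mem_univ u), Finset.card_univ] at hlow
  have hu1 := hdeg1 u
  omega

variable {A B : Type} [Fintype A] [Fintype B]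
  {T' : SimpleGraph A} {T'' : SimpleGraph B} {u : A} {v : B}

local notation "T1" => joinByEdge T' T'' u v
local notation "T2" => attachPendant (graft T' T'' u v) (Sum.inl u)

lemma nbhd_T1_inl {ℓ : A} (hl : ℓ ≠ u) :
    (T1).neighborSet (Sum.inl ℓ) = Sum.inl '' (T'.neighborSet ℓ) := by
  ext x
  rcases x with a | b
  · simp [SimpleGraph.mem_neighborSet]
  · simp [SimpleGraph.mem_neighborSet, hl]

lemma nbhd_T1_inr {b : B} (hb : b ≠ v) :
    (T1).neighborSet (Sum.inr b) = Sum.inr '' (T''.neighborSet b) := by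
  ext x
  rcases x with a | b'
  · simp only [SimpleGraph.mem_neighborSet, join_adj_rl]
    constructor
    · rintro ⟨_, rfl⟩; exact absurd rfl hb
    · rintro ⟨y, _, h⟩; simp at h
  · simp [SimpleGraph.mem_neighborSet]

lemma isLeaf_T1_inl {ℓ : A} (hl : ℓ ≠ u) : IsLeaf (T1) (Sum.inl ℓ) ↔ IsLeaf T' ℓ := by
  unfold IsLeaf
  rw [nbhd_T1_inl hl, Set.ncard_image_of_injective _ Sum.inl_injective]

lemma isLeaf_T1_inr {b : B} (hb : b ≠ v) : IsLeaf (T1) (Sum.inr b) ↔ IsLeaf T'' b := by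
  unfold IsLeaf
  rw [nbhd_T1_inr hb, Set.ncard_image_of_injective _ Sum.inr_injective]

lemma not_isLeaf_T1_u (h1 : T'.IsTree) (hA : 2 ≤ Fintype.card A) :
    ¬ IsLeaf (T1) (Sum.inl u) := by
  intro hleaf
  obtain ⟨a0, ha0⟩ := exists_adj h1.isConnected hA u
  have hsub : ({Sum.inl a0, Sum.inr v} : Set (A ⊕ B)) ⊆ (T1).neighborSet (Sum.inl u) := by
    rintro x (rfl | rfl) <;> simp [SimpleGraph.mem_neighborSet, ha0]
  have h2' : ({Sum.inl a0, Sum.inr v} : Set (A ⊕ B)).ncard = 2 := by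
    rw [Set.ncard_pair (by simp)]
  have := Set.ncard_le_ncard hsub (Set.toFinite _)
  rw [h2', hleaf] at this
  omega

lemma not_isLeaf_T1_v (h2 : T''.IsTree) (hB : 2 ≤ Fintype.card B) :
    ¬ IsLeaf (T1) (Sum.inr v) := by
  intro hleaf
  obtain ⟨b0, hb0⟩ := exists_adj h2.isConnected hB v
  have hsub : ({Sum.inr b0, Sum.inl u} : Set (A ⊕ B)) ⊆ (T1).neighborSet (Sum.inr v) := by
    rintro x (rfl | rfl) <;> simp [SimpleGraph.mem_neighborSet, hb0]
  have h2' : ({Sum.inr b0, Sum.inl u} : Set (A ⊕ B)).ncard = 2 := by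
    rw [Set.ncard_pair (by simp)]
  have := Set.ncard_le_ncard hsub (Set.toFinite _)
  rw [h2', hleaf] at this
  omega

lemma nbhd_T2_ll {ℓ : A} (hl : ℓ ≠ u) :
    (T2).neighborSet (Sum.inl (Sum.inl ℓ))
      = (fun a => (Sum.inl (Sum.inl a) : (A ⊕ {b : B // b ≠ v}) ⊕ Unit)) ''
          (T'.neighborSet ℓ) := by
  ext x
  rcases x with (a | b) | z
  · simp only [SimpleGraph.mem_neighborSet, pendant_adj_ll, graft_adj_ll]
    constructor
    · intro h; exact ⟨a, h, rfl⟩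
    · rintro ⟨y, hy, h⟩
      simp only [Sum.inl.injEq] at h
      rwa [← h]
  · simp only [SimpleGraph.mem_neighborSet, pendant_adj_ll, graft_adj_lr]
    constructor
    · rintro ⟨rfl, _⟩; exact absurd rfl hl
    · rintro ⟨y, _, h⟩; simp at h
  · simp only [SimpleGraph.mem_neighborSet, pendant_adj_lr]
    constructor
    · rintro h; simp only [Sum.inl.injEq] at h; exact absurd h hl
    · rintro ⟨y, _, h⟩; simp at h

lemma isLeaf_T2_ll {ℓ : A} (hl : ℓ ≠ u) :
    IsLeaf (T2) (Sum.inl (Sum.inl ℓ)) ↔ IsLeaf T' ℓ := by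
  unfold IsLeaf
  rw [nbhd_T2_ll hl, Set.ncard_image_of_injective _
    (fun a a' (h : Sum.inl (Sum.inl a) = Sum.inl (Sum.inl a')) => by simpa using h)]

lemma nbhd_T2_lr {b : B} (hb : b ≠ v) :
    (T2).neighborSet (mmap u v (Sum.inr b))
      = (fun b' => mmap u v (Sum.inr b')) '' (T''.neighborSet b) := by
  rw [mmap_inr_ne hb]
  ext x
  rcases x with (a | c) | z
  · simp only [SimpleGraph.mem_neighborSet, pendant_adj_ll, graft_adj_rl]
    constructor
    · rintro ⟨rfl, hadj⟩
      exact ⟨v, hadj.symm, by simp only [mmap_inr_v]⟩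
    · rintro ⟨y, hy, h⟩
      simp only at h
      by_cases hyv : y = v
      · rw [hyv, mmap_inr_v] at h
        simp only [Sum.inl.injEq] at h
        rw [hyv] at hy
        exact ⟨h.symm, hy.symm⟩
      · rw [mmap_inr_ne hyv] at h; simp at h
  · simp only [SimpleGraph.mem_neighborSet, pendant_adj_ll, graft_adj_rr]
    constructor
    · intro h
      exact ⟨↑c, h, by simp only [mmap_inr_ne c.2]⟩
    · rintro ⟨y, hy, h⟩
      simp only at h
      by_cases hyv : y = v
      · rw [hyv, mmap_inr_v] at h; simp at h
      · rw [mmap_inr_ne hyv] at h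
        simp only [Sum.inl.injEq, Sum.inr.injEq] at h
        rw [← h]
        exact hy
  · simp only [SimpleGraph.mem_neighborSet, pendant_adj_lr]
    constructor
    · rintro h; simp at h
    · rintro ⟨y, _, h⟩
      simp only at h
      exact absurd h (mmap_ne_w (Sum.inr y))

lemma isLeaf_T2_lr {b : B} (hb : b ≠ v) :
    IsLeaf (T2) (mmap u v (Sum.inr b)) ↔ IsLeaf T'' b := by
  unfold IsLeaf
  rw [nbhd_T2_lr hb, Set.ncard_image_of_injective _ (fun _ _ h => mmapB_inj h)]

end Leaf

attribute [local instance] Classical.propDecidable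
set_option linter.unusedSectionVars false

section Final
variable {A B : Type} [Fintype A] [Fintype B]
  {T' : SimpleGraph A} {T'' : SimpleGraph B} {u : A} {v : B}

local notation "T1" => joinByEdge T' T'' u v
local notation "T2" => attachPendant (graft T' T'' u v) (Sum.inl u)

lemma mmap_mem_phi {S : Finset (A ⊕ B)} (hsp : S ≠ {Sum.inr v}) {x : A ⊕ B} (hx : x ∈ S) :
    mmap u v x ∈ phi u v S := by
  rw [phi, if_neg hsp]
  by_cases hfl : Sum.inl u ∈ S ∧ Sum.inr v ∈ S
  · rw [if_pos hfl, Finset.mem_union]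
    exact Or.inl (Finset.mem_image_of_mem _ hx)
  · rw [if_neg hfl]
    exact Finset.mem_image_of_mem _ hx

lemma phi_mem_leaf (h1 : T'.IsTree) (h2 : T''.IsTree)
    (hA : 2 ≤ Fintype.card A) (hB : 2 ≤ Fintype.card B)
    {S : Finset (A ⊕ B)} (hS : IsSubtree T1 S) {x : A ⊕ B} (hx : x ∈ S)
    (hleaf : IsLeaf (T1) x) :
    ∃ y ∈ phi u v S, IsLeaf (T2) y := by
  have hsp : S ≠ {Sum.inr v} := by
    intro e
    rw [e, Finset.mem_singleton] at hx
    subst hx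
    exact not_isLeaf_T1_v h2 hB hleaf
  rcases x with ℓ | b
  · have hlu : ℓ ≠ u := by
      rintro rfl
      exact not_isLeaf_T1_u h1 hA hleaf
    exact ⟨Sum.inl (Sum.inl ℓ), mmap_mem_phi hsp hx,
      (isLeaf_T2_ll hlu).mpr ((isLeaf_T1_inl hlu).mp hleaf)⟩
  · have hbv : b ≠ v := by
      rintro rfl
      exact not_isLeaf_T1_v h2 hB hleaf
    exact ⟨mmap u v (Sum.inr b), mmap_mem_phi hsp hx,
      (isLeaf_T2_lr hbv).mpr ((isLeaf_T1_inr hbv).mp hleaf)⟩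

/-- the witness subtree of `T₂` that is not in the image of `phi` -/
noncomputable def wit (u : A) (v : B) (b0 : {b : B // b ≠ v}) :
    Finset ((A ⊕ {b : B // b ≠ v}) ⊕ Unit) :=
  Finset.univ.image (fun a : A => (Sum.inl (Sum.inl a) : (A ⊕ {b : B // b ≠ v}) ⊕ Unit))
    ∪ {Sum.inl (Sum.inr b0)}

lemma wit_subtree (h1 : T'.IsTree) {b0 : {b : B // b ≠ v}} (hb0 : T''.Adj v ↑b0) :
    IsSubtree (T2) (wit u v b0) := by
  refine ⟨⟨Sum.inl (Sum.inr b0), by simp [wit]⟩, ?_⟩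
  have hcoe : ((wit u v b0 : Finset _) : Set ((A ⊕ {b : B // b ≠ v}) ⊕ Unit)) =
      ((fun a : A => (Sum.inl (Sum.inl a) : (A ⊕ {b : B // b ≠ v}) ⊕ Unit)) '' Set.univ)
        ∪ {Sum.inl (Sum.inr b0)} := by
    rw [wit, Finset.coe_union, Finset.coe_image, Finset.coe_univ, Finset.coe_singleton]
  rw [hcoe]
  have hXconn := connected_induce_image (H := T2)
    (f := fun a : A => (Sum.inl (Sum.inl a) : (A ⊕ {b : B // b ≠ v}) ⊕ Unit))
    (fun x _ y _ => t2_adj_ll.symm)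
    ((SimpleGraph.Iso.connected_iff (T'.induceUnivIso)).mpr h1.isConnected)
  exact connected_induce_insert hXconn ⟨u, Set.mem_univ u, rfl⟩
    (by rw [pendant_adj_ll, graft_adj_lr]; exact ⟨rfl, hb0⟩)

lemma wit_not_image (hA : 2 ≤ Fintype.card A) {b0 : {b : B // b ≠ v}}
    {S : Finset (A ⊕ B)} (hS : IsSubtree T1 S) : phi u v S ≠ wit u v b0 := by
  intro heq
  have hw : Sum.inr () ∉ wit u v b0 := by simp [wit]
  by_cases hsp : S = {Sum.inr v}
  · rw [phi, if_pos hsp] at heq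
    apply hw
    rw [← heq]
    simp
  by_cases hfl : Sum.inl u ∈ S ∧ Sum.inr v ∈ S
  · exact hw (heq ▸ w_mem_phi_flag hsp hfl)
  rw [phi, if_neg hsp, if_neg hfl] at heq
  rcases side_or_flag hS.2 hfl with hside | hside
  · have hmem : Sum.inl (Sum.inr b0) ∈ wit u v b0 := by simp [wit]
    rw [← heq] at hmem
    obtain ⟨b, hbv⟩ := b0
    have := mem_image_lr.mp hmem
    obtain ⟨a, ha⟩ := hside _ this
    simp at ha
  · obtain ⟨a1, ha1⟩ := Fintype.exists_ne_of_one_lt_card (by omega) u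
    have hmem : Sum.inl (Sum.inl a1) ∈ wit u v b0 := by simp [wit]
    rw [← heq] at hmem
    rcases mem_image_ll.mp hmem with h | ⟨h, _⟩
    · obtain ⟨b, hb⟩ := hside _ h
      simp at hb
    · exact ha1 h

lemma wit_leaf (h1 : T'.IsTree) (hA : 2 ≤ Fintype.card A) (b0 : {b : B // b ≠ v}) :
    ∃ y ∈ wit u v b0, IsLeaf (T2) y := by
  obtain ⟨ℓ, hlu, hleaf⟩ := exists_leaf_ne h1 hA u
  exact ⟨Sum.inl (Sum.inl ℓ), by simp [wit], (isLeaf_T2_ll hlu).mpr hleaf⟩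

lemma ncard_lt_aux {α β : Type} [Finite β] {s : Set α} {t : Set β} (f : α → β)
    (hmap : ∀ x ∈ s, f x ∈ t) (hinj : Set.InjOn f s) {b0 : β} (hb0 : b0 ∈ t)
    (hb0n : b0 ∉ f '' s) : s.ncard < t.ncard := by
  have hss : f '' s ⊂ t :=
    (Set.ssubset_iff_of_subset (Set.image_subset_iff.mpr hmap)).mpr ⟨b0, hb0, hb0n⟩
  calc s.ncard = (f '' s).ncard := (Set.ncard_image_of_injOn hinj).symm
    _ < t.ncard := Set.ncard_lt_ncard hss (Set.toFinite t)

end Final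


/-- Let `T₁` be obtained from disjoint trees `T'` and `T''` (each with at
least two vertices) by adding the edge `uv`, and let `T₂` be obtained by identifying `u`
with `v` and attaching a new pendant vertex to the identified vertex. Then
`F(T₁) < F(T₂)` and `F*(T₁) < F*(T₂)`. -/
theorem contract_edge_attach_pendant {A B : Type} [Fintype A] [Fintype B]
    (T' : SimpleGraph A) (T'' : SimpleGraph B) (h1 : T'.IsTree) (h2 : T''.IsTree)
    (hA : 2 ≤ Fintype.card A) (hB : 2 ≤ Fintype.card B) (u : A) (v : B) :
    numSubtrees (joinByEdge T' T'' u v) <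
        numSubtrees (attachPendant (graft T' T'' u v) (Sum.inl u)) ∧
      numLeafSubtrees (joinByEdge T' T'' u v) <
        numLeafSubtrees (attachPendant (graft T' T'' u v) (Sum.inl u)) := by
  classical
  obtain ⟨b0, hb0⟩ := exists_adj h2.isConnected hB v
  have hb0v : b0 ≠ v := hb0.ne'
  constructor
  · unfold numSubtrees
    apply ncard_lt_aux (phi u v) ?_ ?_ (b0 := wit u v ⟨b0, hb0v⟩) ?_ ?_
    · intro S hS
      exact phi_subtree hS
    · exact fun S hS S' hS' h => phi_injOn hS hS' h
    · exact wit_subtree (b0 := ⟨b0, hb0v⟩) h1 hb0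
    · rintro ⟨S, hS, heq⟩
      exact wit_not_image hA hS heq
  · unfold numLeafSubtrees
    apply ncard_lt_aux (phi u v) ?_ ?_ (b0 := wit u v ⟨b0, hb0v⟩) ?_ ?_
    · intro S hS
      refine ⟨phi_subtree hS.1, ?_⟩
      obtain ⟨x, hx, hleaf⟩ := hS.2
      exact phi_mem_leaf h1 h2 hA hB hS.1 hx hleaf
    · exact fun S hS S' hS' h => phi_injOn hS.1 hS'.1 h
    · exact ⟨wit_subtree (b0 := ⟨b0, hb0v⟩) h1 hb0, wit_leaf h1 hA _⟩
    · rintro ⟨S, hS, heq⟩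
      exact wit_not_image hA hS.1 heq
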